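/- arXiv:2312.16058 — 3 statements merged into one kernel-verified Lean document; each statement's English description precedes it below -/
import Mathlib

section
/- Let G be a Gauss diagram and let G* be the Gauss diagram of the mirror image (obtained by reversing the direction of every chord and negating every sign). Then for every chord c with corresponding chord c' in G*: sign(c') = −sign(c), i(c') = i(c), r(c') = l(c), l(c') = r(c), and g_{c'}(v) = g_c(v^{−1}). Consequently F_{G*}(u,v) = −F_G(u,v^{−1}). -/
open Finsupp

/-- Formal Laurent polynomials in `v` over `ℤ`, used as exponents of `u`. -/
abbrev LaurentExp : Type := ℤ →₀ ℤ

/-- Formal `ℤ`-linear combinations of symbols `u^p`, `p` a Laurent polynomial in `v`. -/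
abbrev FPoly : Type := LaurentExp →₀ ℤ

/-- A combinatorial Gauss diagram of a knotoid diagram: `n` signed directed chords,
whose `2*n` endpoints (an over-endpoint and an under-endpoint for each chord) occupy
distinct positions along the oriented arc.  The two endpoints of the arc itself lie
before position `0` and after position `2*n - 1`. -/
structure GaussDiagram where
  n : ℕ
  sign : Fin n → ℤ
  overEnd : Fin n → Fin (2 * n)
  under : Fin n → Fin (2 * n)
  sign_pm : ∀ c, sign c = 1 ∨ sign c = -1
  endpoints_inj : Function.Injective (Sum.elim overEnd under)

namespace GaussDiagram

variable (G : GaussDiagram)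

/-- Position `p` lies strictly between the two endpoints of chord `c`,
i.e. on the side of `c` NOT containing the endpoints of the arc
(the complement of the lead side of `c`). -/
def between (c : Fin G.n) (p : Fin (2 * G.n)) : Prop :=
  min (G.overEnd c).val (G.under c).val < p.val ∧ p.val < max (G.overEnd c).val (G.under c).val

instance (c : Fin G.n) (p : Fin (2 * G.n)) : Decidable (G.between c p) := by
  unfold between; infer_instance

/-- Chord `e` crosses chord `c`: exactly one endpoint of `e` lies between the endpoints of `c`. -/
def crosses (c e : Fin G.n) : Prop :=
  e ≠ c ∧ (G.between c (G.overEnd e) ↔ ¬ G.between c (G.under e))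

instance (c e : Fin G.n) : Decidable (G.crosses c e) := by
  unfold crosses; infer_instance

/-- The signed contribution of the endpoints of chord `e` lying on the lead side of `c`
(the over-endpoint counts `sign e`, the under-endpoint counts `- sign e`). -/
def contrib (c e : Fin G.n) : ℤ :=
  (if ¬ G.between c (G.overEnd e) then G.sign e else 0)
    + (if ¬ G.between c (G.under e) then - G.sign e else 0)

/-- The intersection index `i(c)`: the sum of the signs of the chord-endpoints lying on
the lead side of `c`, excluding the endpoints of `c` itself. -/
def i (c : Fin G.n) : ℤ := ∑ e ∈ Finset.univ.erase c, G.contrib c e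

/-- `r(c)`: chords crossing `c` whose over-endpoint lies on the lead side of `c`
(chords pointing away from the lead side). -/
def rset (c : Fin G.n) : Finset (Fin G.n) :=
  Finset.univ.filter fun e => G.crosses c e ∧ ¬ G.between c (G.overEnd e)

/-- `l(c)`: chords crossing `c` whose under-endpoint lies on the lead side of `c`
(chords pointing toward the lead side). -/
def lset (c : Fin G.n) : Finset (Fin G.n) :=
  Finset.univ.filter fun e => G.crosses c e ∧ ¬ G.between c (G.under e)

end GaussDiagram

/-- The reduction map `φ` modulo `m`, realized by canonical representatives in `ℤ`:
for `m ≠ 0` it picks the representative in `[0, m)`; for `m = 0` it is the identity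
(no reduction, matching `ℤ[v,v⁻¹]/(v⁰ - 1) = ℤ[v,v⁻¹]`). -/
def redExp (m : ℕ) (k : ℤ) : ℤ := if m = 0 then k else k % (m : ℤ)

namespace GaussDiagram

variable (G : GaussDiagram)

/-- The index function `g_c(v) = Σ_{r ∈ r(c)} sign(r) v^{φ_c(i(r))} - Σ_{l ∈ l(c)} sign(l) v^{φ_c(-i(l))}`,
an element of `ℤ[v,v⁻¹]/(v^{|i(c)|} - 1)` realized via canonical exponent representatives. -/
noncomputable def gfun (c : Fin G.n) : LaurentExp :=
  (∑ e ∈ G.rset c, G.sign e • Finsupp.single (redExp (G.i c).natAbs (G.i e)) (1 : ℤ))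
    - ∑ e ∈ G.lset c, G.sign e • Finsupp.single (redExp (G.i c).natAbs (- G.i e)) (1 : ℤ)

/-- The F-polynomial `F_G(u,v) = Σ_c sign(c) (u^{g_c(v)} - 1)`. -/
noncomputable def F : FPoly :=
  ∑ c : Fin G.n, G.sign c • (Finsupp.single (G.gfun c) (1 : ℤ) - Finsupp.single 0 1)

end GaussDiagram

/-- The Gauss diagram `G*` of the mirror image: every chord's direction is reversed
(over- and under-endpoints are exchanged) and every sign is negated. -/
def GaussDiagram.mirror (G : GaussDiagram) : GaussDiagram where
  n := G.n
  sign c := - G.sign c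
  overEnd := G.under
  under := G.overEnd
  sign_pm c := by rcases G.sign_pm c with h | h <;> simp [h]
  endpoints_inj := by
    intro x y h
    have := @G.endpoints_inj (x.swap) (y.swap)
      (by cases x <;> cases y <;> simpa using h)
    cases x <;> cases y <;> simpa using this

/-- The substitution `v ↦ v⁻¹` performed in the quotient ring `ℤ[v,v⁻¹]/(v^m - 1)`:
each exponent `k` is replaced by the canonical representative of `-k` mod `m`. -/
noncomputable def vinvAt (m : ℕ) : LaurentExp → LaurentExp :=
  Finsupp.mapDomain fun k => redExp m (-k)

/-- `F_G(u, v⁻¹)`: the F-polynomial with `v ↦ v⁻¹` substituted in each exponent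
`g_c(v)`, the substitution being taken in the appropriate ring `ℤ[v,v⁻¹]/(v^{|i(c)|}-1)`. -/
noncomputable def GaussDiagram.Fvinv (G : GaussDiagram) : FPoly :=
  ∑ c : Fin G.n,
    G.sign c • (Finsupp.single (vinvAt (G.i c).natAbs (G.gfun c)) (1 : ℤ)
      - Finsupp.single 0 1)


namespace GaussDiagram

lemma mirror_between (G : GaussDiagram) (c : Fin G.n) (p : Fin (2 * G.n)) :
    G.mirror.between c p ↔ G.between c p := by
  simp [between, mirror, min_comm, max_comm, and_comm]

lemma mirror_crosses (G : GaussDiagram) (c e : Fin G.n) :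
    G.mirror.crosses c e ↔ G.crosses c e := by
  simp only [crosses]
  have h1 := G.mirror_between c (G.overEnd e)
  have h2 := G.mirror_between c (G.under e)
  show e ≠ c ∧ (G.mirror.between c (G.under e) ↔ ¬ G.mirror.between c (G.overEnd e)) ↔ _
  rw [h1, h2]
  show _ ∧ (G.between c (G.under e) ↔ ¬ G.between c (G.overEnd e)) ↔ _
  tauto

lemma mirror_i (G : GaussDiagram) (c : Fin G.n) : G.mirror.i c = G.i c := by
  unfold i
  refine Finset.sum_congr rfl fun (e : Fin G.n) _ => ?_
  simp only [contrib]
  have h1 : G.mirror.between c (G.mirror.overEnd e) ↔ G.between c (G.under e) :=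
    G.mirror_between c (G.under e)
  have h2 : G.mirror.between c (G.mirror.under e) ↔ G.between c (G.overEnd e) :=
    G.mirror_between c (G.overEnd e)
  simp only [h1, h2]
  show (if ¬ G.between c (G.under e) then -G.sign e else 0)
      + (if ¬ G.between c (G.overEnd e) then -(-G.sign e) else 0) = _
  simp [add_comm]

lemma mirror_rset (G : GaussDiagram) (c : Fin G.n) : G.mirror.rset c = G.lset c := by
  unfold rset lset
  congr 1
  funext e
  exact propext <|
    and_congr (G.mirror_crosses c e) (not_congr (G.mirror_between c (G.under e)))

lemma mirror_lset (G : GaussDiagram) (c : Fin G.n) : G.mirror.lset c = G.rset c := by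
  unfold rset lset
  congr 1
  funext e
  exact propext <|
    and_congr (G.mirror_crosses c e) (not_congr (G.mirror_between c (G.overEnd e)))

lemma redExp_neg_red (m : ℕ) (k : ℤ) : redExp m (-(redExp m k)) = redExp m (-k) := by
  unfold redExp
  split
  · rfl
  · rw [Int.neg_emod_eq_sub_emod, Int.neg_emod_eq_sub_emod, Int.sub_emod, Int.emod_emod_of_dvd _ dvd_rfl,
      ← Int.sub_emod]

lemma mapDomain_sub' (f : ℤ → ℤ) (a b : LaurentExp) :
    Finsupp.mapDomain f (a - b) = Finsupp.mapDomain f a - Finsupp.mapDomain f b :=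
  map_sub (Finsupp.mapDomain.addMonoidHom f) a b

lemma mirror_gfun (G : GaussDiagram) (c : Fin G.n) :
    G.mirror.gfun c = vinvAt (G.i c).natAbs (G.gfun c) := by
  have hsign : ∀ e, G.mirror.sign e = - G.sign e := fun e => rfl
  unfold gfun vinvAt
  rw [mirror_rset, mirror_lset, mirror_i]
  show (∑ e ∈ G.lset c, (-G.sign e) • Finsupp.single (redExp (G.i c).natAbs (G.mirror.i e)) (1 : ℤ))
    - ∑ e ∈ G.rset c, (-G.sign e) • Finsupp.single (redExp (G.i c).natAbs (- G.mirror.i e)) (1 : ℤ) = _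
  rw [mapDomain_sub', Finsupp.mapDomain_finset_sum, Finsupp.mapDomain_finset_sum]
  simp only [Finsupp.mapDomain_smul, Finsupp.mapDomain_single, hsign, mirror_i,
    redExp_neg_red, neg_smul, neg_neg]
  rw [Finset.sum_neg_distrib, Finset.sum_neg_distrib, sub_neg_eq_add, neg_add_eq_sub]

end GaussDiagram

/-- for the mirror Gauss diagram `G*`, every chord `c` (with corresponding
chord `c'` in `G*`) satisfies `sign(c') = - sign(c)`, `i(c') = i(c)`, `r(c') = l(c)`,
`l(c') = r(c)` and `g_{c'}(v) = g_c(v⁻¹)`; consequently `F_{G*}(u,v) = - F_G(u, v⁻¹)`. -/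
theorem mirror_behavior (G : GaussDiagram) :
    (∀ c : Fin G.n, G.mirror.sign c = - G.sign c) ∧
    (∀ c : Fin G.n, G.mirror.i c = G.i c) ∧
    (∀ c : Fin G.n, G.mirror.rset c = G.lset c) ∧
    (∀ c : Fin G.n, G.mirror.lset c = G.rset c) ∧
    (∀ c : Fin G.n, G.mirror.gfun c = vinvAt (G.i c).natAbs (G.gfun c)) ∧
    G.mirror.F = - G.Fvinv := by
  refine ⟨fun c => rfl, G.mirror_i, G.mirror_rset, G.mirror_lset, G.mirror_gfun, ?_⟩
  unfold GaussDiagram.F GaussDiagram.Fvinv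
  rw [← Finset.sum_neg_distrib]
  refine Finset.sum_congr rfl fun (c : Fin G.n) _ => ?_
  rw [G.mirror_gfun]
  show (- G.sign c) • _ = _
  rw [neg_smul]
end

section
/- For the knotoid diagram D₁ (knotoid 5.1.3), whose Gauss diagram has five chords a₁, b₁, c₁, d₁, e₁ with signs (+1, +1, −1, −1, −1), intersection indices (−1, −1, 0, 0, 0), and crossing data r(a₁)=∅, l(a₁)={b₁}; r(b₁)=∅, l(b₁)={a₁}; r(c₁)={e₁}, l(c₁)={d₁}; r(d₁)={e₁}, l(d₁)={c₁}; r(e₁)={d₁}, l(e₁)={c₁}, one has g_{a₁}(v) = g_{b₁}(v) = −1 and g_{c₁}(v) = g_{d₁}(v) = g_{e₁}(v) = 0, hence F_{D₁}(u,v) = −2 + 2u^{−1}. In particular F_{D₁}(u,v) ≠ F_{D₂}(u,v) = −3u^{v^{−1}−v} + 2u^{−1} + 1, although the index polynomials agree: F_{D₁}(t) = F_{D₂}(t) = −2 + 2t^{−1}. -/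
open Finsupp

/-- The Gauss diagram of the knotoid diagram `D₂` (knotoid 5.1.4 of Bartholomew's table):
five chords `a₂, b₂, c₂, d₂, e₂` (indexed `0,…,4`) with signs `(-1, 1, 1, -1, -1)`;
endpoint positions along the arc read off from the diagram. -/
def D2 : GaussDiagram where
  n := 5
  sign := ![-1, 1, 1, -1, -1]
  overEnd := fun c => Fin.cast (by norm_num) ((![0, 7, 2, 9, 5] : Fin 5 → Fin 10) c)
  under := fun c => Fin.cast (by norm_num) ((![3, 1, 6, 4, 8] : Fin 5 → Fin 10) c)
  sign_pm := by decide
  endpoints_inj := by decide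

/-- The Gauss diagram of the knotoid diagram `D₁` (knotoid 5.1.3 of Bartholomew's table):
five chords `a₁, b₁, c₁, d₁, e₁` (indexed `0,…,4`) with signs `(1, 1, -1, -1, -1)`. -/
def D1 : GaussDiagram where
  n := 5
  sign := ![1, 1, -1, -1, -1]
  overEnd := fun c => Fin.cast (by norm_num) ((![8, 1, 5, 3, 7] : Fin 5 → Fin 10) c)
  under := fun c => Fin.cast (by norm_num) ((![0, 9, 2, 6, 4] : Fin 5 → Fin 10) c)
  sign_pm := by decide
  endpoints_inj := by decide

/-- The index polynomial `F_D(t) = Σ_c sign(c)(t^{i(c)} - 1)`. -/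
noncomputable def GaussDiagram.indexPoly (G : GaussDiagram) : ℤ →₀ ℤ :=
  ∑ c : Fin G.n, G.sign c • (Finsupp.single (G.i c) (1 : ℤ) - Finsupp.single 0 1)

def a₁ : Fin D1.n := ⟨0, by decide⟩
def b₁ : Fin D1.n := ⟨1, by decide⟩
def c₁ : Fin D1.n := ⟨2, by decide⟩
def d₁ : Fin D1.n := ⟨3, by decide⟩
def e₁ : Fin D1.n := ⟨4, by decide⟩

/-- for `D₁` (knotoid 5.1.3), one has `g_{a₁}(v) = g_{b₁}(v) = -1` and
`g_{c₁}(v) = g_{d₁}(v) = g_{e₁}(v) = 0`, hence `F_{D₁}(u,v) = -2 + 2u^{-1}`.  In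
particular `F_{D₁}(u,v) ≠ F_{D₂}(u,v) = -3u^{v⁻¹-v} + 2u^{-1} + 1`, although the index
polynomials agree: `F_{D₁}(t) = F_{D₂}(t) = -2 + 2t^{-1}`. -/
theorem D1_vs_D2 :
    (D1.gfun a₁ = - Finsupp.single 0 1 ∧ D1.gfun b₁ = - Finsupp.single 0 1 ∧
     D1.gfun c₁ = 0 ∧ D1.gfun d₁ = 0 ∧ D1.gfun e₁ = 0) ∧
    D1.F = (2 : ℤ) • Finsupp.single (- Finsupp.single 0 1) (1 : ℤ)
        - (2 : ℤ) • Finsupp.single 0 1 ∧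
    D2.F = (-3 : ℤ) • Finsupp.single (Finsupp.single (-1 : ℤ) (1 : ℤ) - Finsupp.single 1 1) (1 : ℤ)
        + (2 : ℤ) • Finsupp.single (- Finsupp.single 0 1) 1
        + Finsupp.single 0 1 ∧
    D1.F ≠ D2.F ∧
    D1.indexPoly = (2 : ℤ) • Finsupp.single (-1 : ℤ) (1 : ℤ)
        - (2 : ℤ) • Finsupp.single 0 1 ∧
    D1.indexPoly = D2.indexPoly := by
  have hq1 : (Finsupp.single (-1:ℤ) (1:ℤ) - Finsupp.single 1 1) ≠ (- Finsupp.single 0 1 : LaurentExp) := by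
    intro h
    have h2 := DFunLike.congr_fun h (-1)
    rw [Finsupp.sub_apply, Finsupp.neg_apply, Finsupp.single_apply, Finsupp.single_apply,
      Finsupp.single_apply] at h2
    norm_num at h2
  have hq0 : (Finsupp.single (-1:ℤ) (1:ℤ) - Finsupp.single 1 1) ≠ (0 : LaurentExp) := by
    intro h
    have h2 := DFunLike.congr_fun h (-1)
    rw [Finsupp.sub_apply, Finsupp.single_apply, Finsupp.single_apply] at h2
    norm_num at h2
  have hga : D1.gfun a₁ = - Finsupp.single 0 1 := by
    unfold GaussDiagram.gfun
    rw [show D1.rset a₁ = ∅ from by decide, show D1.lset a₁ = {b₁} from by decide]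
    rw [Finset.sum_empty, Finset.sum_singleton,
      show D1.sign b₁ = 1 from by decide,
      show redExp (D1.i a₁).natAbs (- D1.i b₁) = 0 from by decide]
    simp
  have hgb : D1.gfun b₁ = - Finsupp.single 0 1 := by
    unfold GaussDiagram.gfun
    rw [show D1.rset b₁ = ∅ from by decide, show D1.lset b₁ = {a₁} from by decide]
    rw [Finset.sum_empty, Finset.sum_singleton,
      show D1.sign a₁ = 1 from by decide,
      show redExp (D1.i b₁).natAbs (- D1.i a₁) = 0 from by decide]
    simp
  have hgc : D1.gfun c₁ = 0 := by
    unfold GaussDiagram.gfun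
    rw [show D1.rset c₁ = {e₁} from by decide, show D1.lset c₁ = {d₁} from by decide]
    rw [Finset.sum_singleton, Finset.sum_singleton,
      show D1.sign e₁ = -1 from by decide, show D1.sign d₁ = -1 from by decide,
      show redExp (D1.i c₁).natAbs (D1.i e₁) = 0 from by decide,
      show redExp (D1.i c₁).natAbs (- D1.i d₁) = 0 from by decide]
    simp
  have hgd : D1.gfun d₁ = 0 := by
    unfold GaussDiagram.gfun
    rw [show D1.rset d₁ = {e₁} from by decide, show D1.lset d₁ = {c₁} from by decide]
    rw [Finset.sum_singleton, Finset.sum_singleton,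
      show D1.sign e₁ = -1 from by decide, show D1.sign c₁ = -1 from by decide,
      show redExp (D1.i d₁).natAbs (D1.i e₁) = 0 from by decide,
      show redExp (D1.i d₁).natAbs (- D1.i c₁) = 0 from by decide]
    simp
  have hge : D1.gfun e₁ = 0 := by
    unfold GaussDiagram.gfun
    rw [show D1.rset e₁ = {d₁} from by decide, show D1.lset e₁ = {c₁} from by decide]
    rw [Finset.sum_singleton, Finset.sum_singleton,
      show D1.sign d₁ = -1 from by decide, show D1.sign c₁ = -1 from by decide,
      show redExp (D1.i e₁).natAbs (D1.i d₁) = 0 from by decide,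
      show redExp (D1.i e₁).natAbs (- D1.i c₁) = 0 from by decide]
    simp
  have hF1 : D1.F = (2 : ℤ) • Finsupp.single (- Finsupp.single 0 1 : LaurentExp) (1 : ℤ)
      - (2 : ℤ) • Finsupp.single 0 1 := by
    unfold GaussDiagram.F
    rw [show (Finset.univ : Finset (Fin D1.n)) = {a₁, b₁, c₁, d₁, e₁} from by decide]
    rw [Finset.sum_insert (by decide), Finset.sum_insert (by decide),
      Finset.sum_insert (by decide), Finset.sum_insert (by decide), Finset.sum_singleton]
    rw [hga, hgb, hgc, hgd, hge,
      show D1.sign a₁ = 1 from by decide, show D1.sign b₁ = 1 from by decide,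
      show D1.sign c₁ = -1 from by decide, show D1.sign d₁ = -1 from by decide,
      show D1.sign e₁ = -1 from by decide]
    module
  have hg0 : D2.gfun ⟨0, by decide⟩ =
      Finsupp.single (-1:ℤ) (1:ℤ) - Finsupp.single 1 1 := by
    unfold GaussDiagram.gfun
    rw [show D2.rset ⟨0, by decide⟩ = {⟨1, by decide⟩} from by decide,
      show D2.lset ⟨0, by decide⟩ = {⟨2, by decide⟩} from by decide]
    rw [Finset.sum_singleton, Finset.sum_singleton,
      show D2.sign ⟨1, by decide⟩ = 1 from by decide,
      show D2.sign ⟨2, by decide⟩ = 1 from by decide,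
      show redExp (D2.i ⟨0, by decide⟩).natAbs (D2.i ⟨1, by decide⟩) = -1 from by decide,
      show redExp (D2.i ⟨0, by decide⟩).natAbs (- D2.i ⟨2, by decide⟩) = 1 from by decide]
    module
  have hg1 : D2.gfun ⟨1, by decide⟩ = - Finsupp.single 0 1 := by
    unfold GaussDiagram.gfun
    rw [show D2.rset ⟨1, by decide⟩ = {⟨0, by decide⟩, ⟨3, by decide⟩} from by decide,
      show D2.lset ⟨1, by decide⟩ = {⟨4, by decide⟩} from by decide]
    rw [Finset.sum_insert (by decide), Finset.sum_singleton, Finset.sum_singleton,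
      show D2.sign ⟨0, by decide⟩ = -1 from by decide,
      show D2.sign ⟨3, by decide⟩ = -1 from by decide,
      show D2.sign ⟨4, by decide⟩ = -1 from by decide,
      show redExp (D2.i ⟨1, by decide⟩).natAbs (D2.i ⟨0, by decide⟩) = 0 from by decide,
      show redExp (D2.i ⟨1, by decide⟩).natAbs (D2.i ⟨3, by decide⟩) = 0 from by decide,
      show redExp (D2.i ⟨1, by decide⟩).natAbs (- D2.i ⟨4, by decide⟩) = 0 from by decide]
    module
  have hg2 : D2.gfun ⟨2, by decide⟩ = - Finsupp.single 0 1 := by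
    unfold GaussDiagram.gfun
    rw [show D2.rset ⟨2, by decide⟩ = {⟨0, by decide⟩, ⟨3, by decide⟩} from by decide,
      show D2.lset ⟨2, by decide⟩ = {⟨4, by decide⟩} from by decide]
    rw [Finset.sum_insert (by decide), Finset.sum_singleton, Finset.sum_singleton,
      show D2.sign ⟨0, by decide⟩ = -1 from by decide,
      show D2.sign ⟨3, by decide⟩ = -1 from by decide,
      show D2.sign ⟨4, by decide⟩ = -1 from by decide,
      show redExp (D2.i ⟨2, by decide⟩).natAbs (D2.i ⟨0, by decide⟩) = 0 from by decide,
      show redExp (D2.i ⟨2, by decide⟩).natAbs (D2.i ⟨3, by decide⟩) = 0 from by decide,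
      show redExp (D2.i ⟨2, by decide⟩).natAbs (- D2.i ⟨4, by decide⟩) = 0 from by decide]
    module
  have hg3 : D2.gfun ⟨3, by decide⟩ =
      Finsupp.single (-1:ℤ) (1:ℤ) - Finsupp.single 1 1 := by
    unfold GaussDiagram.gfun
    rw [show D2.rset ⟨3, by decide⟩ = {⟨2, by decide⟩} from by decide,
      show D2.lset ⟨3, by decide⟩ = {⟨1, by decide⟩} from by decide]
    rw [Finset.sum_singleton, Finset.sum_singleton,
      show D2.sign ⟨2, by decide⟩ = 1 from by decide,
      show D2.sign ⟨1, by decide⟩ = 1 from by decide,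
      show redExp (D2.i ⟨3, by decide⟩).natAbs (D2.i ⟨2, by decide⟩) = -1 from by decide,
      show redExp (D2.i ⟨3, by decide⟩).natAbs (- D2.i ⟨1, by decide⟩) = 1 from by decide]
    module
  have hg4 : D2.gfun ⟨4, by decide⟩ =
      Finsupp.single (-1:ℤ) (1:ℤ) - Finsupp.single 1 1 := by
    unfold GaussDiagram.gfun
    rw [show D2.rset ⟨4, by decide⟩ = {⟨2, by decide⟩} from by decide,
      show D2.lset ⟨4, by decide⟩ = {⟨1, by decide⟩} from by decide]
    rw [Finset.sum_singleton, Finset.sum_singleton,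
      show D2.sign ⟨2, by decide⟩ = 1 from by decide,
      show D2.sign ⟨1, by decide⟩ = 1 from by decide,
      show redExp (D2.i ⟨4, by decide⟩).natAbs (D2.i ⟨2, by decide⟩) = -1 from by decide,
      show redExp (D2.i ⟨4, by decide⟩).natAbs (- D2.i ⟨1, by decide⟩) = 1 from by decide]
    module
  have hF2 : D2.F = (-3 : ℤ) • Finsupp.single
        (Finsupp.single (-1 : ℤ) (1 : ℤ) - Finsupp.single 1 1) (1 : ℤ)
      + (2 : ℤ) • Finsupp.single (- Finsupp.single 0 1) 1
      + Finsupp.single 0 1 := by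
    unfold GaussDiagram.F
    rw [show (Finset.univ : Finset (Fin D2.n)) =
      {⟨0, by decide⟩, ⟨1, by decide⟩, ⟨2, by decide⟩, ⟨3, by decide⟩, ⟨4, by decide⟩}
      from by decide]
    rw [Finset.sum_insert (by decide), Finset.sum_insert (by decide),
      Finset.sum_insert (by decide), Finset.sum_insert (by decide), Finset.sum_singleton]
    rw [hg0, hg1, hg2, hg3, hg4,
      show D2.sign ⟨0, by decide⟩ = -1 from by decide,
      show D2.sign ⟨1, by decide⟩ = 1 from by decide,
      show D2.sign ⟨2, by decide⟩ = 1 from by decide,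
      show D2.sign ⟨3, by decide⟩ = -1 from by decide,
      show D2.sign ⟨4, by decide⟩ = -1 from by decide]
    module
  have hne : D1.F ≠ D2.F := by
    rw [hF1, hF2]
    intro h
    have h2 := DFunLike.congr_fun h (Finsupp.single (-1:ℤ) (1:ℤ) - Finsupp.single 1 1)
    simp only [Finsupp.sub_apply, Finsupp.add_apply, Finsupp.smul_apply,
      Finsupp.single_apply] at h2
    rw [if_pos trivial] at h2
    norm_num at h2
    rw [if_neg (Ne.symm hq1), if_neg (Ne.symm hq0)] at h2
    omega
  have hI1 : D1.indexPoly = (2 : ℤ) • Finsupp.single (-1 : ℤ) (1 : ℤ)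
      - (2 : ℤ) • Finsupp.single 0 1 := by
    unfold GaussDiagram.indexPoly
    rw [show (Finset.univ : Finset (Fin D1.n)) = {a₁, b₁, c₁, d₁, e₁} from by decide]
    rw [Finset.sum_insert (by decide), Finset.sum_insert (by decide),
      Finset.sum_insert (by decide), Finset.sum_insert (by decide), Finset.sum_singleton]
    rw [show D1.sign a₁ = 1 from by decide, show D1.sign b₁ = 1 from by decide,
      show D1.sign c₁ = -1 from by decide, show D1.sign d₁ = -1 from by decide,
      show D1.sign e₁ = -1 from by decide,
      show D1.i a₁ = -1 from by decide, show D1.i b₁ = -1 from by decide,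
      show D1.i c₁ = 0 from by decide, show D1.i d₁ = 0 from by decide,
      show D1.i e₁ = 0 from by decide]
    module
  have hI2 : D2.indexPoly = (2 : ℤ) • Finsupp.single (-1 : ℤ) (1 : ℤ)
      - (2 : ℤ) • Finsupp.single 0 1 := by
    unfold GaussDiagram.indexPoly
    rw [show (Finset.univ : Finset (Fin D2.n)) =
      {⟨0, by decide⟩, ⟨1, by decide⟩, ⟨2, by decide⟩, ⟨3, by decide⟩, ⟨4, by decide⟩}
      from by decide]
    rw [Finset.sum_insert (by decide), Finset.sum_insert (by decide),
      Finset.sum_insert (by decide), Finset.sum_insert (by decide), Finset.sum_singleton]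
    rw [show D2.sign ⟨0, by decide⟩ = -1 from by decide,
      show D2.sign ⟨1, by decide⟩ = 1 from by decide,
      show D2.sign ⟨2, by decide⟩ = 1 from by decide,
      show D2.sign ⟨3, by decide⟩ = -1 from by decide,
      show D2.sign ⟨4, by decide⟩ = -1 from by decide,
      show D2.i ⟨0, by decide⟩ = 0 from by decide,
      show D2.i ⟨1, by decide⟩ = -1 from by decide,
      show D2.i ⟨2, by decide⟩ = -1 from by decide,
      show D2.i ⟨3, by decide⟩ = 0 from by decide,
      show D2.i ⟨4, by decide⟩ = 0 from by decide]
    module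
  exact ⟨⟨hga, hgb, hgc, hgd, hge⟩, hF1, hF2, hne, hI1, hI1.trans hI2.symm⟩
end

section
/- Let G be a Gauss diagram with three mutually crossing chords c₁, c₂, c₃ in the Ω_{3a} Reidemeister III configuration, and let G' be the diagram after the move with corresponding chords c₁', c₂', c₃' (signs +1, −1, +1 respectively on both sides, all other chords and crossings unchanged). Given the relations g_{c₁}(v) = g_{c₁'}(v) + v^{φ_{c₁}(−i(c₂))} − v^{φ_{c₁}(−i(c₃))}, g_{c₂}(v) = g_{c₂'}(v) + v^{φ_{c₂}(i(c₁))} − v^{φ_{c₂}(−i(c₃))}, g_{c₃}(v) = g_{c₃'}(v) + v^{φ_{c₃}(i(c₁))} − v^{φ_{c₃}(i(c₂))}, and given i(c₁) + i(c₃) = i(c₂), it follows that g_{cₖ}(v) = g_{cₖ'}(v) for k = 1, 2, 3, and hence F_{G'}(u,v) = F_G(u,v). -/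
open Finsupp

lemma redExp_eq_of_dvd (m a b : ℤ) (h : m ∣ a - b) :
    redExp m.natAbs a = redExp m.natAbs b := by
  unfold redExp
  rcases eq_or_ne m 0 with hm | hm
  · simp [hm, sub_eq_zero.mp (by simpa [hm] using h)]
  · have hm' : m.natAbs ≠ 0 := Int.natAbs_ne_zero.mpr hm
    simp only [hm', if_false]
    rw [Int.emod_eq_emod_iff_emod_sub_eq_zero]
    exact Int.emod_eq_zero_of_dvd ((Int.natAbs_dvd).mpr h)

/-- let `G` and `G'` be Gauss diagrams related by the oriented Reidemeister
III move `Ω_{3a}`, with the three mutually crossing chords `c₁, c₂, c₃` of `G`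
corresponding to `c₁', c₂', c₃'` of `G'` (signs `+1, -1, +1` on both sides, all other
chords having unchanged signs and index functions).  Given the relations
`g_{cₖ}(v) = g_{cₖ'}(v) + v^{φ_{cₖ}(·)} - v^{φ_{cₖ}(·)}` coming from the move, and
`i(c₁) + i(c₃) = i(c₂)`, it follows that `g_{cₖ}(v) = g_{cₖ'}(v)` for `k = 1, 2, 3`,
and hence `F_{G'}(u,v) = F_G(u,v)`. -/
theorem r3_invariance (G G' : GaussDiagram) (hn : G'.n = G.n)
    (c1 c2 c3 : Fin G.n) (h12 : c1 ≠ c2) (h13 : c1 ≠ c3) (h23 : c2 ≠ c3)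
    (hs1 : G.sign c1 = 1) (hs2 : G.sign c2 = -1) (hs3 : G.sign c3 = 1)
    (hs1' : G'.sign (Fin.cast hn.symm c1) = 1)
    (hs2' : G'.sign (Fin.cast hn.symm c2) = -1)
    (hs3' : G'.sign (Fin.cast hn.symm c3) = 1)
    (hother : ∀ c : Fin G.n, c ≠ c1 → c ≠ c2 → c ≠ c3 →
        G'.sign (Fin.cast hn.symm c) = G.sign c ∧
        G'.gfun (Fin.cast hn.symm c) = G.gfun c)
    (hrel1 : G.gfun c1 = G'.gfun (Fin.cast hn.symm c1)
        + Finsupp.single (redExp (G.i c1).natAbs (- G.i c2)) 1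
        - Finsupp.single (redExp (G.i c1).natAbs (- G.i c3)) 1)
    (hrel2 : G.gfun c2 = G'.gfun (Fin.cast hn.symm c2)
        + Finsupp.single (redExp (G.i c2).natAbs (G.i c1)) 1
        - Finsupp.single (redExp (G.i c2).natAbs (- G.i c3)) 1)
    (hrel3 : G.gfun c3 = G'.gfun (Fin.cast hn.symm c3)
        + Finsupp.single (redExp (G.i c3).natAbs (G.i c1)) 1
        - Finsupp.single (redExp (G.i c3).natAbs (G.i c2)) 1)
    (hiden : G.i c1 + G.i c3 = G.i c2) :
    G.gfun c1 = G'.gfun (Fin.cast hn.symm c1) ∧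
    G.gfun c2 = G'.gfun (Fin.cast hn.symm c2) ∧
    G.gfun c3 = G'.gfun (Fin.cast hn.symm c3) ∧
    G'.F = G.F := by
  have e1 : redExp (G.i c1).natAbs (- G.i c2) = redExp (G.i c1).natAbs (- G.i c3) :=
    redExp_eq_of_dvd _ _ _ ⟨-1, by linarith⟩
  have e2 : redExp (G.i c2).natAbs (G.i c1) = redExp (G.i c2).natAbs (- G.i c3) :=
    redExp_eq_of_dvd _ _ _ ⟨1, by linarith⟩
  have e3 : redExp (G.i c3).natAbs (G.i c1) = redExp (G.i c3).natAbs (G.i c2) :=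
    redExp_eq_of_dvd _ _ _ ⟨-1, by linarith⟩
  have hg1 : G.gfun c1 = G'.gfun (Fin.cast hn.symm c1) := by rw [hrel1, e1]; abel
  have hg2 : G.gfun c2 = G'.gfun (Fin.cast hn.symm c2) := by rw [hrel2, e2]; abel
  have hg3 : G.gfun c3 = G'.gfun (Fin.cast hn.symm c3) := by rw [hrel3, e3]; abel
  refine ⟨hg1, hg2, hg3, ?_⟩
  unfold GaussDiagram.F
  refine (Fintype.sum_equiv (finCongr hn.symm) _ _ fun c => ?_).symm
  rcases eq_or_ne c c1 with rfl | h1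
  · simp [finCongr, hs1, hs1', hg1]
  rcases eq_or_ne c c2 with rfl | h2
  · simp [finCongr, hs2, hs2', hg2]
  rcases eq_or_ne c c3 with rfl | h3
  · simp [finCongr, hs3, hs3', hg3]
  obtain ⟨ha, hb⟩ := hother c h1 h2 h3
  simp [finCongr, ha, hb]
end
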